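/- Let E be a real vector space, C ⊆ E a nonempty convex set, I a finite index set, V_i : C → ℝ affine for each i ∈ I, and V_Σ : C → ℝ affine. Suppose Strong Pareto holds: for all p, q ∈ C, if V_i(p) ≥ V_i(q) for all i ∈ I then V_Σ(p) ≥ V_Σ(q), and if moreover V_j(p) > V_j(q) for some j ∈ I then V_Σ(p) > V_Σ(q). Suppose also richness: for every i ∈ I there exist p, q ∈ C with V_i(p) > V_i(q) and V_j(p) = V_j(q) for all j ≠ i. Then there exist c ∈ ℝ and weights w : I → ℝ with w_i > 0 for every i ∈ I such that V_Σ(p) = c + Σ_{i∈I} w_i·V_i(p) for all p ∈ C; moreover, every pair (c, w) satisfying this identity has w_i > 0 for all i ∈ I. -/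
import Mathlib

open scoped BigOperators

/-- An affine (ℝ-valued) function on a convex set extends: there is a global linear map
agreeing with its increments from a base point. -/
lemma affine_on_convex_extend {F : Type*} [AddCommGroup F] [Module ℝ F] {D : Set F}
    (hD : Convex ℝ D) {d0 : F} (hd0 : d0 ∈ D) (W : F → ℝ)
    (hW : ∀ x ∈ D, ∀ y ∈ D, ∀ a b : ℝ, 0 ≤ a → 0 ≤ b → a + b = 1 →
        W (a • x + b • y) = a * W x + b * W y) :
    ∃ L : F →ₗ[ℝ] ℝ, ∀ d ∈ D, W d = W d0 + L (d - d0) := by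
  classical
  have hcvx : ConvexOn ℝ D W :=
    ⟨hD, fun x hx y hy a b ha hb hab => by
      rw [smul_eq_mul, smul_eq_mul]; exact (hW x hx y hy a b ha hb hab).le⟩
  have hccv : ConcaveOn ℝ D W :=
    ⟨hD, fun x hx y hy a b ha hb hab => by
      rw [smul_eq_mul, smul_eq_mul]; exact (hW x hx y hy a b ha hb hab).ge⟩
  set gs : Set (F × ℝ) := (fun d => (d - d0, W d - W d0)) '' D with hgs
  set g : Submodule ℝ (F × ℝ) := Submodule.span ℝ gs with hgdef
  have hg : ∀ (x : F × ℝ) (_hx : x ∈ g) (_hx' : x.fst = 0), x.snd = 0 := by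
    intro x hx hx1
    rw [hgdef, Submodule.mem_span_set'] at hx
    obtain ⟨n, f, gpt, hsum⟩ := hx
    choose d hdD hdE using fun i => (gpt i).2
    have hfst : ∑ i, f i • (d i - d0) = 0 := by
      have := congrArg Prod.fst hsum
      rw [Prod.fst_sum] at this
      rw [← hx1, ← this]
      refine Finset.sum_congr rfl fun i _ => ?_
      rw [← hdE i]; simp
    have hsnd : ∑ i, f i * (W (d i) - W d0) = x.snd := by
      have := congrArg Prod.snd hsum
      rw [Prod.snd_sum] at this
      rw [← this]
      refine Finset.sum_congr rfl fun i _ => ?_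
      rw [← hdE i]; simp
    -- split coefficients into positive and nonpositive parts
    set P : Fin n → ℝ := fun i => if 0 < f i then f i else 0 with hP
    set N : Fin n → ℝ := fun i => if 0 < f i then 0 else -f i with hN
    have hPN : ∀ i, P i - N i = f i := by
      intro i; by_cases h : 0 < f i <;> simp [hP, hN, h]
    have hP0 : ∀ i, 0 ≤ P i := by
      intro i; by_cases h : 0 < f i <;> simp [hP, h]; linarith
    have hN0 : ∀ i, 0 ≤ N i := by
      intro i; by_cases h : 0 < f i <;> simp [hN, h]; linarith [not_lt.mp h]
    set A : ℝ := ∑ i, P i with hA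
    set B : ℝ := ∑ i, N i with hB
    have hA0 : 0 ≤ A := Finset.sum_nonneg fun i _ => hP0 i
    have hB0 : 0 ≤ B := Finset.sum_nonneg fun i _ => hN0 i
    have hfsum : ∑ i, f i = A - B := by
      rw [hA, hB, ← Finset.sum_sub_distrib]
      exact Finset.sum_congr rfl fun i _ => (hPN i).symm
    set wP : Option (Fin n) → ℝ := fun o => o.elim B P with hwP
    set wN : Option (Fin n) → ℝ := fun o => o.elim A N with hwN
    set z : Option (Fin n) → F := fun o => o.elim d0 d with hz
    have hzD : ∀ o, z o ∈ D := by rintro (_ | i) <;> [exact hd0; exact hdD i]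
    have hwP0 : ∀ o, 0 ≤ wP o := by rintro (_ | i) <;> [exact hB0; exact hP0 i]
    have hwN0 : ∀ o, 0 ≤ wN o := by rintro (_ | i) <;> [exact hA0; exact hN0 i]
    have hwPsum : ∑ o : Option (Fin n), wP o = B + A := by
      rw [Fintype.sum_option]; rfl
    have hwNsum : ∑ o : Option (Fin n), wN o = A + B := by
      rw [Fintype.sum_option]; rfl
    have hkey : ∑ o : Option (Fin n), wP o • z o = ∑ o : Option (Fin n), wN o • z o := by
      have hdiff : ∑ o : Option (Fin n), wP o • z o - ∑ o : Option (Fin n), wN o • z o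
          = (B - A) • d0 + ∑ i, f i • d i := by
        rw [← Finset.sum_sub_distrib]
        have hsm : ∀ o : Option (Fin n), wP o • z o - wN o • z o = (wP o - wN o) • z o := by
          intro o; rw [sub_smul]
        simp_rw [hsm]
        rw [Fintype.sum_option]
        congr 1
        refine Finset.sum_congr rfl fun i _ => ?_
        show (P i - N i) • d i = f i • d i
        rw [hPN i]
      have h2 : ∑ i, f i • d i = (A - B) • d0 := by
        have h3 : ∑ i, f i • d i - (∑ i, f i) • d0 = 0 := by
          rw [Finset.sum_smul, ← Finset.sum_sub_distrib, ← hfst]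
          exact Finset.sum_congr rfl fun i _ => by rw [smul_sub]
        rw [hfsum] at h3
        exact sub_eq_zero.mp h3
      have hzero : (B - A) • d0 + ∑ i, f i • d i = 0 := by
        rw [h2, ← add_smul]
        have : B - A + (A - B) = 0 := by ring
        rw [this, zero_smul]
      exact sub_eq_zero.mp (hdiff.trans hzero)
    have hkeyW : ∑ o : Option (Fin n), wP o * W (z o) - ∑ o : Option (Fin n), wN o * W (z o)
        = x.snd := by
      rw [← Finset.sum_sub_distrib]
      have hsm : ∀ o : Option (Fin n), wP o * W (z o) - wN o * W (z o)
          = (wP o - wN o) * W (z o) := by intro o; ring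
      simp_rw [hsm]
      rw [Fintype.sum_option, ← hsnd]
      have hnone : (wP none - wN none) * W (z none) = (B - A) * W d0 := rfl
      rw [hnone]
      have hsome : ∑ i, (wP (some i) - wN (some i)) * W (z (some i)) = ∑ i, f i * W (d i) := by
        refine Finset.sum_congr rfl fun i _ => ?_
        show (P i - N i) * W (d i) = f i * W (d i)
        rw [hPN i]
      rw [hsome]
      have hexp : ∑ i, f i * (W (d i) - W d0) = ∑ i, f i * W (d i) - (∑ i, f i) * W d0 := by
        rw [Finset.sum_mul, ← Finset.sum_sub_distrib]
        exact Finset.sum_congr rfl fun i _ => by ring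
      rw [hexp, hfsum]; ring
    by_cases hm : A + B = 0
    · have hAz : A = 0 := by linarith
      have hBz : B = 0 := by linarith
      have hAz' : ∑ i, P i = 0 := by rw [← hA]; exact hAz
      have hBz' : ∑ i, N i = 0 := by rw [← hB]; exact hBz
      have hfz : ∀ i, f i = 0 := by
        intro i
        have hPz : P i = 0 :=
          (Finset.sum_eq_zero_iff_of_nonneg (fun j _ => hP0 j)).mp hAz' i (Finset.mem_univ i)
        have hNz : N i = 0 :=
          (Finset.sum_eq_zero_iff_of_nonneg (fun j _ => hN0 j)).mp hBz' i (Finset.mem_univ i)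
        rw [← hPN i, hPz, hNz]; ring
      rw [← hsnd]
      exact Finset.sum_eq_zero fun i _ => by rw [hfz i]; ring
    · have hmpos : 0 < A + B := lt_of_le_of_ne (by linarith) (Ne.symm hm)
      have hPsumpos : 0 < ∑ o : Option (Fin n), wP o := by rw [hwPsum]; linarith
      have hNsumpos : 0 < ∑ o : Option (Fin n), wN o := by rw [hwNsum]; linarith
      have hcmeq : Finset.univ.centerMass wP z = Finset.univ.centerMass wN z := by
        rw [Finset.centerMass, Finset.centerMass, hkey, hwPsum, hwNsum, add_comm B A]
      have h1 : W (Finset.univ.centerMass wP z) = Finset.univ.centerMass wP (W ∘ z) :=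
        le_antisymm
          (hcvx.map_centerMass_le (fun o _ => hwP0 o) hPsumpos (fun o _ => hzD o))
          (hccv.le_map_centerMass (fun o _ => hwP0 o) hPsumpos (fun o _ => hzD o))
      have h2 : W (Finset.univ.centerMass wN z) = Finset.univ.centerMass wN (W ∘ z) :=
        le_antisymm
          (hcvx.map_centerMass_le (fun o _ => hwN0 o) hNsumpos (fun o _ => hzD o))
          (hccv.le_map_centerMass (fun o _ => hwN0 o) hNsumpos (fun o _ => hzD o))
      have heq : Finset.univ.centerMass wP (W ∘ z) = Finset.univ.centerMass wN (W ∘ z) := by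
        rw [← h1, ← h2, hcmeq]
      rw [Finset.centerMass, Finset.centerMass, hwPsum, hwNsum, add_comm B A,
        smul_eq_mul, smul_eq_mul] at heq
      have hinv : ((A + B)⁻¹ : ℝ) ≠ 0 := inv_ne_zero hm
      have heq2 : ∑ o : Option (Fin n), wP o • (W ∘ z) o
          = ∑ o : Option (Fin n), wN o • (W ∘ z) o := mul_left_cancel₀ hinv heq
      rw [← hkeyW, sub_eq_zero]
      simpa [smul_eq_mul, Function.comp] using heq2
  -- now build the linear map
  obtain ⟨q, hq⟩ := Submodule.exists_isCompl (Submodule.toLinearPMap g).domain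
  refine ⟨(Submodule.toLinearPMap g).toFun.comp
    ((Submodule.toLinearPMap g).domain.linearProjOfIsCompl q hq), ?_⟩
  intro d hd
  have hmem : (d - d0, W d - W d0) ∈ g := Submodule.subset_span ⟨d, hd, rfl⟩
  have hgraph : (Submodule.toLinearPMap g).graph = g := Submodule.toLinearPMap_graph_eq g hg
  have hmemg : (d - d0, W d - W d0) ∈ (Submodule.toLinearPMap g).graph := by
    rw [hgraph]; exact hmem
  rw [LinearPMap.mem_graph_iff] at hmemg
  obtain ⟨y, hy1, hy2⟩ := hmemg
  have hy1' : (y : F) = d - d0 := hy1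
  have hy2' : (Submodule.toLinearPMap g) y = W d - W d0 := hy2
  have hproj : (Submodule.toLinearPMap g).domain.linearProjOfIsCompl q hq (d - d0) = y := by
    conv_lhs => rw [← hy1']
    exact Submodule.linearProjOfIsCompl_apply_left hq y
  have hfinal : (Submodule.toLinearPMap g).toFun.comp
      ((Submodule.toLinearPMap g).domain.linearProjOfIsCompl q hq) (d - d0) = W d - W d0 := by
    rw [LinearMap.comp_apply, hproj, LinearPMap.toFun_eq_coe]
    exact hy2'
  rw [hfinal]; ring
/-- **Harsanyi aggregation with Strong Pareto.** Under Strong Pareto and a richness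
condition, the affine aggregate of finitely many affine individual value functions on a
nonempty convex set is a weighted sum plus a constant with strictly positive weights;
moreover every such representation has strictly positive weights. -/
theorem harsanyi_aggregation_strong_pareto
    {E : Type*} [AddCommGroup E] [Module ℝ E] {C : Set E}
    (hne : C.Nonempty) (hconv : Convex ℝ C)
    {I : Type*} [Fintype I]
    (V : I → E → ℝ) (Vagg : E → ℝ)
    (hV : ∀ i, ∀ x ∈ C, ∀ y ∈ C, ∀ β : ℝ, 0 ≤ β → β ≤ 1 →
        V i (β • x + (1 - β) • y) = β * V i x + (1 - β) * V i y)
    (hVagg : ∀ x ∈ C, ∀ y ∈ C, ∀ β : ℝ, 0 ≤ β → β ≤ 1 →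
        Vagg (β • x + (1 - β) • y) = β * Vagg x + (1 - β) * Vagg y)
    (strongParetoWeak : ∀ p ∈ C, ∀ q ∈ C, (∀ i, V i q ≤ V i p) → Vagg q ≤ Vagg p)
    (strongParetoStrict : ∀ p ∈ C, ∀ q ∈ C, (∀ i, V i q ≤ V i p) →
        (∃ j, V j q < V j p) → Vagg q < Vagg p)
    (richness : ∀ i, ∃ p ∈ C, ∃ q ∈ C, V i q < V i p ∧ ∀ j, j ≠ i → V j p = V j q) :
    (∃ (c : ℝ) (w : I → ℝ), (∀ i, 0 < w i) ∧
        ∀ p ∈ C, Vagg p = c + ∑ i, w i * V i p) ∧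
    (∀ (c : ℝ) (w : I → ℝ), (∀ p ∈ C, Vagg p = c + ∑ i, w i * V i p) →
        ∀ i, 0 < w i) := by
  classical
  -- Part 2: any representation has positive weights.
  have part2 : ∀ (c : ℝ) (w : I → ℝ), (∀ p ∈ C, Vagg p = c + ∑ i, w i * V i p) →
      ∀ i, 0 < w i := by
    intro c w hrep i
    obtain ⟨p, hp, q, hq, hlt, heq⟩ := richness i
    have hle : ∀ j, V j q ≤ V j p := by
      intro j
      by_cases h : j = i
      · subst h; exact hlt.le
      · exact (heq j h).ge
    have hstrict : Vagg q < Vagg p := strongParetoStrict p hp q hq hle ⟨i, hlt⟩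
    have hsum : Vagg p - Vagg q = w i * (V i p - V i q) := by
      rw [hrep p hp, hrep q hq]
      have h1 : c + ∑ j, w j * V j p - (c + ∑ j, w j * V j q)
          = ∑ j, (w j * V j p - w j * V j q) := by
        rw [Finset.sum_sub_distrib]; ring
      rw [h1]
      rw [Finset.sum_eq_single i (fun j _ hj => by rw [heq j hj]; ring)
        (fun h => absurd (Finset.mem_univ i) h)]
      ring
    have hpos : 0 < w i * (V i p - V i q) := hsum ▸ sub_pos.mpr hstrict
    by_contra hw
    push_neg at hw
    nlinarith [sub_pos.mpr hlt]
  refine ⟨?_, part2⟩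
  -- Part 1: construct the representation.
  set Φ : E → (I → ℝ) := fun p i => V i p with hΦ
  set D : Set (I → ℝ) := Φ '' C with hDdef
  obtain ⟨p₀, hp₀⟩ := hne
  -- affineness of Φ on C
  have hΦaff : ∀ x ∈ C, ∀ y ∈ C, ∀ a b : ℝ, 0 ≤ a → 0 ≤ b → a + b = 1 →
      Φ (a • x + b • y) = a • Φ x + b • Φ y := by
    intro x hx y hy a b ha hb hab
    funext i
    have hb' : b = 1 - a := by linarith
    have := hV i x hx y hy a ha (by linarith)
    rw [hb']
    simpa using this
  have hDconv : Convex ℝ D := by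
    rintro _ ⟨x, hx, rfl⟩ _ ⟨y, hy, rfl⟩ a b ha hb hab
    exact ⟨a • x + b • y, hconv hx hy ha hb hab, hΦaff x hx y hy a b ha hb hab⟩
  -- well-defined aggregate on D
  set W : (I → ℝ) → ℝ := fun u => Vagg (Function.invFunOn Φ C u) with hWdef
  have hWrep : ∀ p ∈ C, W (Φ p) = Vagg p := by
    intro p hp
    have hex : ∃ a ∈ C, Φ a = Φ p := ⟨p, hp, rfl⟩
    have hrC : Function.invFunOn Φ C (Φ p) ∈ C := Function.invFunOn_mem hex
    have hrE : Φ (Function.invFunOn Φ C (Φ p)) = Φ p := Function.invFunOn_eq hex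
    have hVeq : ∀ i, V i (Function.invFunOn Φ C (Φ p)) = V i p := fun i =>
      congrFun hrE i
    exact le_antisymm
      (strongParetoWeak p hp _ hrC fun i => (hVeq i).le)
      (strongParetoWeak _ hrC p hp fun i => (hVeq i).ge)
  have hWaff : ∀ u ∈ D, ∀ v ∈ D, ∀ a b : ℝ, 0 ≤ a → 0 ≤ b → a + b = 1 →
      W (a • u + b • v) = a * W u + b * W v := by
    rintro _ ⟨x, hx, rfl⟩ _ ⟨y, hy, rfl⟩ a b ha hb hab
    have hmem : a • x + b • y ∈ C := hconv hx hy ha hb hab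
    rw [← hΦaff x hx y hy a b ha hb hab, hWrep _ hmem, hWrep x hx, hWrep y hy]
    have hb' : b = 1 - a := by linarith
    rw [hb']
    exact hVagg x hx y hy a ha (by linarith)
  have hd0 : Φ p₀ ∈ D := ⟨p₀, hp₀, rfl⟩
  obtain ⟨L, hL⟩ := affine_on_convex_extend hDconv hd0 W hWaff
  refine ⟨W (Φ p₀) - L (Φ p₀), fun i => L (fun j => if i = j then 1 else 0), ?_⟩
  have hrepr : ∀ p ∈ C, Vagg p = (W (Φ p₀) - L (Φ p₀))
      + ∑ i, L (fun j => if i = j then 1 else 0) * V i p := by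
    intro p hp
    have h1 : Vagg p = W (Φ p₀) + L (Φ p - Φ p₀) := by
      rw [← hWrep p hp]; exact hL (Φ p) ⟨p, hp, rfl⟩
    rw [h1, map_sub]
    have h2 : L (Φ p) = ∑ i, Φ p i • L (fun j => if i = j then 1 else 0) :=
      LinearMap.pi_apply_eq_sum_univ L (Φ p)
    rw [h2]
    have h3 : ∑ i, Φ p i • L (fun j => if i = j then 1 else 0)
        = ∑ i, L (fun j => if i = j then 1 else 0) * V i p := by
      refine Finset.sum_congr rfl fun i _ => ?_
      rw [smul_eq_mul]; ring
    rw [h3]; ring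
  exact ⟨part2 _ _ hrepr, hrepr⟩
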